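/- Let H be a Hopf algebra over a field k with bijective antipode, all of whose irreducible modules are finite-dimensional. Then a finite-dimensional H-module is tensor-reducible if and only if it is a direct sum of tensor-reducible irreducible H-modules. -/

import Mathlib

open TensorProduct

universe u

section TensorRep

variable (k H V W : Type u) [CommSemiring k] [Semiring H] [Bialgebra k H]
  [AddCommMonoid V] [Module k V] [Module H V] [IsScalarTower k H V] [SMulCommClass H k V]
  [AddCommMonoid W] [Module k W] [Module H W] [IsScalarTower k H W] [SMulCommClass H k W]

/-- The representation of the bialgebra `H` on the tensor product of two `H`-modules,
given by the comultiplication of `H`. -/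
noncomputable def tensorRep : H →ₐ[k] Module.End k (V ⊗[k] W) :=
  ((Module.endTensorEndAlgHom (R := k) (S := k) (A := k) (M := V) (N := W)).comp
    (Algebra.TensorProduct.map (Algebra.lsmul k k V) (Algebra.lsmul k k W))).comp
    (Bialgebra.comulAlgHom k H)

/-- The tensor product `V ⊗[k] W` of two `H`-modules, regarded as an `H`-module via the
comultiplication of `H` (a type synonym of `V ⊗[k] W`). -/
def ModuleTensor (_ : Type u) : Type u := V ⊗[k] W

variable {H}

noncomputable instance : AddCommMonoid (ModuleTensor k V W H) :=
  inferInstanceAs (AddCommMonoid (V ⊗[k] W))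

noncomputable instance : Module k (ModuleTensor k V W H) :=
  inferInstanceAs (Module k (V ⊗[k] W))

noncomputable instance instAddCommGroupModuleTensor
    {k V W : Type u} [CommSemiring k] [AddCommGroup V] [Module k V]
    [AddCommGroup W] [Module k W] (H : Type u) :
    AddCommGroup (ModuleTensor k V W H) :=
  inferInstanceAs (AddCommGroup (V ⊗[k] W))

variable (H)

/-- The `H`-module structure on `V ⊗[k] W` via the comultiplication of `H`. -/
noncomputable instance : Module H (ModuleTensor k V W H) :=
  Module.compHom (V ⊗[k] W) (tensorRep k H V W).toRingHom

instance : IsScalarTower k H (ModuleTensor k V W H) :=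
  ⟨fun c h x => by
    show (tensorRep k H V W (c • h)) x = c • ((tensorRep k H V W h) x)
    rw [map_smul]
    rfl⟩

instance : SMulCommClass H k (ModuleTensor k V W H) :=
  ⟨fun h c x => by
    show (tensorRep k H V W h) (c • x) = c • ((tensorRep k H V W h) x)
    exact (tensorRep k H V W h).map_smul c x⟩

end TensorRep

section Reducible

variable (k H : Type u) [Field k] [Ring H] [HopfAlgebra k H]

/-- An `H`-module `V` is left tensor-reducible if `V ⊗ W` is a semisimple `H`-module
for every irreducible finite-dimensional `H`-module `W`. -/
def LeftTensorReducible (V : Type u) [AddCommGroup V] [Module k V] [Module H V]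
    [IsScalarTower k H V] [SMulCommClass H k V] : Prop :=
  ∀ (W : Type u) [AddCommGroup W] [Module k W] [Module H W] [IsScalarTower k H W]
    [SMulCommClass H k W] [FiniteDimensional k W], IsSimpleModule H W →
      IsSemisimpleModule H (ModuleTensor k V W H)

/-- An `H`-module `V` is right tensor-reducible if `W ⊗ V` is a semisimple `H`-module
for every irreducible finite-dimensional `H`-module `W`. -/
def RightTensorReducible (V : Type u) [AddCommGroup V] [Module k V] [Module H V]
    [IsScalarTower k H V] [SMulCommClass H k V] : Prop :=
  ∀ (W : Type u) [AddCommGroup W] [Module k W] [Module H W] [IsScalarTower k H W]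
    [SMulCommClass H k W] [FiniteDimensional k W], IsSimpleModule H W →
      IsSemisimpleModule H (ModuleTensor k W V H)

/-- An `H`-module is tensor-reducible if it is both left and right tensor-reducible. -/
def TensorReducible (V : Type u) [AddCommGroup V] [Module k V] [Module H V]
    [IsScalarTower k H V] [SMulCommClass H k V] : Prop :=
  LeftTensorReducible k H V ∧ RightTensorReducible k H V

end Reducible

section Aux

variable {k H : Type u} [Field k] [Ring H] [HopfAlgebra k H]

variable {V W V' W' : Type u}
  [AddCommGroup V] [Module k V] [Module H V] [IsScalarTower k H V] [SMulCommClass H k V]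
  [AddCommGroup W] [Module k W] [Module H W] [IsScalarTower k H W] [SMulCommClass H k W]
  [AddCommGroup V'] [Module k V'] [Module H V'] [IsScalarTower k H V'] [SMulCommClass H k V']
  [AddCommGroup W'] [Module k W'] [Module H W'] [IsScalarTower k H W'] [SMulCommClass H k W']

/-- Identity map into the tensor-module type synonym. -/
def toMT (x : V ⊗[k] W) : ModuleTensor k V W H := x

theorem moduleTensor_smul_def (h : H) (x : ModuleTensor k V W H) :
    h • x = tensorRep k H V W h (x : V ⊗[k] W) := rfl

theorem tensorRep_apply (h : H) (x : V ⊗[k] W) :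
    tensorRep k H V W h x =
      (Module.endTensorEndAlgHom (R := k) (S := k) (A := k) (M := V) (N := W)
        ((Algebra.TensorProduct.map (Algebra.lsmul k k V) (Algebra.lsmul k k W))
          (Coalgebra.comul h))) x := rfl

theorem map_tensorRep (f : V →ₗ[k] V') (g : W →ₗ[k] W')
    (hf : ∀ (h : H) v, f (h • v) = h • f v) (hg : ∀ (h : H) w, g (h • w) = h • g w)
    (h : H) (x : V ⊗[k] W) :
    TensorProduct.map f g (tensorRep k H V W h x) =
      tensorRep k H V' W' h (TensorProduct.map f g x) := by
  rw [tensorRep_apply, tensorRep_apply]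
  generalize Coalgebra.comul (R := k) h = z
  induction z using TensorProduct.induction_on with
  | zero => simp
  | add z₁ z₂ h₁ h₂ => simp only [map_add, LinearMap.add_apply, map_add, h₁, h₂]
  | tmul a b =>
      rw [Algebra.TensorProduct.map_tmul, Algebra.TensorProduct.map_tmul,
        Module.endTensorEndAlgHom_apply, Module.endTensorEndAlgHom_apply]
      induction x using TensorProduct.induction_on with
      | zero => simp
      | add x₁ x₂ h₁ h₂ => simp only [map_add, h₁, h₂]
      | tmul v w =>
          simp only [TensorProduct.AlgebraTensorModule.map_tmul, TensorProduct.map_tmul]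
          show (f (a • v)) ⊗ₜ[k] (g (b • w)) = (a • f v) ⊗ₜ[k] (b • g w)
          rw [hf, hg]

/-- Tensoring two `H`-equivariant `k`-linear maps gives an `H`-linear map of the
tensor product modules. -/
noncomputable def mapModuleTensor (f : V →ₗ[k] V') (g : W →ₗ[k] W')
    (hf : ∀ (h : H) v, f (h • v) = h • f v) (hg : ∀ (h : H) w, g (h • w) = h • g w) :
    ModuleTensor k V W H →ₗ[H] ModuleTensor k V' W' H where
  toFun x := (TensorProduct.map f g (x : V ⊗[k] W) : ModuleTensor k V' W' H)
  map_add' x y := map_add _ x y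
  map_smul' h x := by
    show TensorProduct.map f g ((h • x : ModuleTensor k V W H) : V ⊗[k] W) = _
    rw [moduleTensor_smul_def]
    exact map_tensorRep f g hf hg h x

theorem map_injective' {f : V →ₗ[k] V'} {g : W →ₗ[k] W'}
    (hf : Function.Injective f) (hg : Function.Injective g) :
    Function.Injective (TensorProduct.map f g) := by
  have heq : TensorProduct.map f g = (LinearMap.lTensor V' g).comp (LinearMap.rTensor W f) := by
    ext v w; simp
  rw [heq]
  exact (Module.Flat.lTensor_preserves_injective_linearMap g hg).comp
    (Module.Flat.rTensor_preserves_injective_linearMap f hf)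

theorem semisimple_of_embed {A B : Type u} [AddCommGroup A] [Module H A]
    [AddCommGroup B] [Module H B] (F : A →ₗ[H] B) (hF : Function.Injective F)
    [IsSemisimpleModule H B] : IsSemisimpleModule H A :=
  IsSemisimpleModule.congr (LinearEquiv.ofInjective F hF)

instance submoduleSMulCommClass (p : Submodule H V) : SMulCommClass H k ↥p where
  smul_comm h c x := Subtype.ext
    (show h • (c • (x : V)) = c • (h • (x : V)) from smul_comm h c (x : V))

/-- The `k`-linear inclusion of a `H`-submodule. -/
def inclK (k : Type u) {H V : Type u} [Field k] [Ring H] [HopfAlgebra k H]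
    [AddCommGroup V] [Module k V] [Module H V] [IsScalarTower k H V]
    (p : Submodule H V) : ↥p →ₗ[k] V where
  toFun := Subtype.val
  map_add' _ _ := rfl
  map_smul' _ _ := rfl

theorem inclK_comm (p : Submodule H V) (h : H) (x : ↥p) :
    inclK k p (h • x) = h • inclK k p x := rfl

/-- The trivial one-dimensional `H`-module, with action through the counit. -/
def TrivMod (k H : Type u) : Type u := k

/-- Identity map into the type synonym. -/
def TrivMod.of {k H : Type u} (c : k) : TrivMod k H := c

/-- Identity map out of the type synonym. -/
def TrivMod.toK {k H : Type u} (c : TrivMod k H) : k := c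

noncomputable instance : AddCommGroup (TrivMod k H) := inferInstanceAs (AddCommGroup k)
noncomputable instance : Module k (TrivMod k H) := inferInstanceAs (Module k k)
noncomputable instance : Module H (TrivMod k H) :=
  Module.compHom k (Bialgebra.counitAlgHom k H).toRingHom

theorem trivMod_smul (h : H) (c : TrivMod k H) :
    h • c = TrivMod.of (Coalgebra.counit (R := k) h * TrivMod.toK c) := rfl

theorem counit_smul (c : k) (h : H) :
    Coalgebra.counit (R := k) (c • h) = c * Coalgebra.counit (R := k) h := by
  rw [map_smul, smul_eq_mul]

instance : IsScalarTower k H (TrivMod k H) :=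
  ⟨fun c h x => by
    show TrivMod.of (Coalgebra.counit (R := k) (c • h) * TrivMod.toK x)
      = TrivMod.of (c * (Coalgebra.counit (R := k) h * TrivMod.toK x))
    rw [counit_smul, mul_assoc]⟩

instance : SMulCommClass H k (TrivMod k H) :=
  ⟨fun h c x => by
    show TrivMod.of (Coalgebra.counit (R := k) h * (c * TrivMod.toK x))
      = TrivMod.of (c * (Coalgebra.counit (R := k) h * TrivMod.toK x))
    rw [mul_left_comm]⟩

instance : FiniteDimensional k (TrivMod k H) := inferInstanceAs (FiniteDimensional k k)

instance : IsSimpleModule H (TrivMod k H) := by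
  haveI : Nontrivial (Submodule H (TrivMod k H)) := by
    refine ⟨⊥, ⊤, fun hbt => ?_⟩
    have h1 : (TrivMod.of (1 : k) : TrivMod k H) ∈ (⊤ : Submodule H (TrivMod k H)) :=
      Submodule.mem_top
    rw [← hbt, Submodule.mem_bot] at h1
    exact one_ne_zero (α := k) h1
  suffices IsSimpleOrder (Submodule H (TrivMod k H)) from ⟨⟩
  refine ⟨fun p => ?_⟩
  rcases eq_or_ne p ⊥ with h | h
  · exact Or.inl h
  · refine Or.inr (eq_top_iff.2 fun y _ => ?_)
    obtain ⟨x, hx, hx0⟩ := Submodule.exists_mem_ne_zero_of_ne_bot h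
    have key : y = ((TrivMod.toK y * (TrivMod.toK x)⁻¹ : k) • x : TrivMod k H) := by
      show TrivMod.toK y = (TrivMod.toK y * (TrivMod.toK x)⁻¹) * TrivMod.toK x
      have hx' : TrivMod.toK x ≠ 0 := hx0
      field_simp
    rw [key, ← algebraMap_smul H (TrivMod.toK y * (TrivMod.toK x)⁻¹ : k) x]
    exact p.smul_mem _ hx

/-- The `H`-linear isomorphism `V ⊗ k ≃ V` for the trivial module `k`. -/
noncomputable def ridH (k H V : Type u) [Field k] [Ring H] [HopfAlgebra k H]
    [AddCommGroup V] [Module k V] [Module H V] [IsScalarTower k H V] [SMulCommClass H k V] :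
    ModuleTensor k V (TrivMod k H) H ≃ₗ[H] V where
  toFun x := TensorProduct.rid k V (x : V ⊗[k] (TrivMod k H))
  invFun v := ((TensorProduct.rid k V).symm v : ModuleTensor k V (TrivMod k H) H)
  left_inv x := (TensorProduct.rid k V).symm_apply_apply x
  right_inv v := (TensorProduct.rid k V).apply_symm_apply v
  map_add' x y := map_add _ x y
  map_smul' h x := by
    show TensorProduct.rid k V ((h • x : ModuleTensor k V (TrivMod k H) H) : V ⊗[k] _)
      = h • TensorProduct.rid k V x
    rw [moduleTensor_smul_def]
    induction x using TensorProduct.induction_on with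
    | zero =>
        show TensorProduct.rid k V (tensorRep k H V (TrivMod k H) h 0)
          = h • TensorProduct.rid k V (0 : V ⊗[k] TrivMod k H)
        have e : TensorProduct.rid k V (0 : V ⊗[k] k) = 0 := map_zero _
        rw [map_zero]
        exact (e.trans (smul_zero h).symm).trans (congrArg _ e.symm)
    | add x₁ x₂ h₁ h₂ =>
        show TensorProduct.rid k V (tensorRep k H V (TrivMod k H) h (x₁ + x₂))
          = h • TensorProduct.rid k V (x₁ + x₂ : V ⊗[k] TrivMod k H)
        rw [map_add]
        exact (map_add (TensorProduct.rid k V) (tensorRep k H V (TrivMod k H) h x₁)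
          (tensorRep k H V (TrivMod k H) h x₂)).trans ((congrArg₂ (· + ·) h₁ h₂).trans
          ((smul_add h _ _).symm.trans (congrArg _ (map_add (TensorProduct.rid k V) x₁ x₂).symm)))
    | tmul v c =>
        rw [tensorRep_apply]
        let ν : H →ₗ[k] V :=
          { toFun := fun a => a • (TrivMod.toK c • v)
            map_add' := fun a b => add_smul a b (TrivMod.toK c • v)
            map_smul' := fun t a => smul_assoc t a (TrivMod.toK c • v) }
        let δ : H ⊗[k] k →ₗ[k] V := ν.comp (TensorProduct.rid k H).toLinearMap
        have key : ∀ z : H ⊗[k] H,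
            TensorProduct.rid k V
              ((Module.endTensorEndAlgHom (R := k) (S := k) (A := k) (M := V)
                  (N := TrivMod k H)
                ((Algebra.TensorProduct.map (Algebra.lsmul k k V)
                  (Algebra.lsmul k k (TrivMod k H))) z)) (v ⊗ₜ[k] c))
              = δ ((LinearMap.lTensor H (Coalgebra.counit (R := k) (A := H))) z) := by
          intro z
          induction z using TensorProduct.induction_on with
          | zero => simp
                    exact map_zero (TensorProduct.rid k V)
          | add z₁ z₂ h₁ h₂ => simp only [map_add, LinearMap.add_apply, h₁, h₂]
                               rw [← h₁, ← h₂]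
                               exact map_add (TensorProduct.rid k V) _ _
          | tmul a b =>
              rw [Algebra.TensorProduct.map_tmul, Module.endTensorEndAlgHom_apply]
              simp only [TensorProduct.AlgebraTensorModule.map_tmul, LinearMap.lTensor_tmul,
                Algebra.lsmul_coe, TensorProduct.rid_tmul, δ, ν, LinearMap.comp_apply,
                LinearEquiv.coe_coe, LinearMap.coe_mk, AddHom.coe_mk]
              have hb : (b • c : TrivMod k H)
                  = (Coalgebra.counit (R := k) b * TrivMod.toK c : k) := rfl
              rw [hb, smul_assoc, smul_comm a (TrivMod.toK c) v]
              exact (TensorProduct.rid_tmul _ _).trans (mul_smul _ _ _)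
        rw [key (Coalgebra.comul h)]
        rw [Coalgebra.lTensor_counit_comul]
        have hδ : δ (h ⊗ₜ[k] (1 : k)) = h • (TrivMod.toK c • v) := by
          simp only [δ, ν, LinearMap.comp_apply, LinearEquiv.coe_coe,
            TensorProduct.rid_tmul, one_smul, LinearMap.coe_mk, AddHom.coe_mk]
        rw [hδ]
        show h • (TrivMod.toK c • v) = h • TensorProduct.rid k V (v ⊗ₜ[k] TrivMod.toK c)
        rw [TensorProduct.rid_tmul]

end Aux
/-- Over a Hopf algebra with bijective antipode all of whose irreducible modules are
finite-dimensional, a finite-dimensional `H`-module is tensor-reducible if and only if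
it is a direct sum of tensor-reducible irreducible `H`-modules. -/
theorem tensorReducible_iff_directSum_of_tensorReducible_simples
    {k H : Type u} [Field k] [Ring H] [HopfAlgebra k H]
    (hS : Function.Bijective (HopfAlgebra.antipode (R := k) (A := H)))
    (hirr : ∀ (W : Type u) [AddCommGroup W] [Module k W] [Module H W]
      [IsScalarTower k H W] [SMulCommClass H k W],
      IsSimpleModule H W → FiniteDimensional k W)
    (V : Type u) [AddCommGroup V] [Module k V] [Module H V] [IsScalarTower k H V]
    [SMulCommClass H k V] [FiniteDimensional k V] :
    TensorReducible k H V ↔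
      ∃ S : Set (Submodule H V), sSupIndep S ∧ sSup S = ⊤ ∧
        ∀ p ∈ S, IsSimpleModule H ↥p ∧
          (haveI : SMulCommClass H k ↥p :=
            ⟨fun h c x => Subtype.ext (smul_comm h c (x : V))⟩
           TensorReducible k H ↥p) := by
  constructor
  · rintro ⟨hL, hR⟩
    haveI hssT : IsSemisimpleModule H (ModuleTensor k V (TrivMod k H) H) :=
      hL (TrivMod k H) inferInstance
    haveI hVss : IsSemisimpleModule H V := IsSemisimpleModule.congr (ridH k H V).symm
    obtain ⟨S, hindep, hsup, hsimple⟩ :=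
      IsSemisimpleModule.exists_sSupIndep_sSup_simples_eq_top H V
    refine ⟨S, hindep, hsup, fun p hp => ?_⟩
    haveI hps : IsSimpleModule H ↥p := hsimple p hp
    refine ⟨hps, ?_, ?_⟩
    · -- left tensor-reducibility of p
      intro W _ _ _ _ _ _ hW
      haveI := hL W hW
      exact semisimple_of_embed (B := ModuleTensor k V W H)
        (mapModuleTensor (inclK k p) (LinearMap.id (R := k) (M := W))
          (inclK_comm p) (fun _ _ => rfl))
        (map_injective' Subtype.val_injective fun _ _ hab => hab)
    · -- right tensor-reducibility of p
      intro W _ _ _ _ _ _ hW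
      haveI := hR W hW
      exact semisimple_of_embed (B := ModuleTensor k W V H)
        (mapModuleTensor (LinearMap.id (R := k) (M := W)) (inclK k p)
          (fun _ _ => rfl) (inclK_comm p))
        (map_injective' (fun _ _ hab => hab) Subtype.val_injective)
  · rintro ⟨S, hindep, hsup, hS⟩
    constructor
    · -- left tensor-reducibility of V
      intro W _ _ _ _ _ _ hW
      refine isSemisimpleModule_of_isSemisimpleModule_submodule (s := S)
        (p := fun p => LinearMap.range
          (mapModuleTensor (inclK k p) (LinearMap.id (R := k) (M := W))
            (inclK_comm p) (fun _ _ => rfl))) ?_ ?_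
      · intro p hp
        haveI := (hS p hp).1
        haveI := (hS p hp).2.1 W hW
        exact IsSemisimpleModule.congr
          (LinearEquiv.ofInjective
            (mapModuleTensor (H := H) (inclK k p) (LinearMap.id (R := k) (M := W))
              (inclK_comm p) (fun _ _ => rfl))
            (map_injective' Subtype.val_injective fun _ _ hab => hab)).symm
      · rw [eq_top_iff]
        rintro x -
        induction x using TensorProduct.induction_on with
        | zero => exact Submodule.zero_mem _
        | add a b ha hb => exact Submodule.add_mem _ ha hb
        | tmul v w =>
          have hv : v ∈ ⨆ p : S, (p : Submodule H V) := by
            rw [← sSup_eq_iSup', hsup]; exact Submodule.mem_top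
          refine Submodule.iSup_induction (p := fun p : S => (p : Submodule H V))
            (motive := fun v => toMT (H := H) (v ⊗ₜ[k] w) ∈ _) hv ?_ ?_ ?_
          · rintro ⟨p, hp⟩ v hv
            refine Submodule.mem_iSup_of_mem p (Submodule.mem_iSup_of_mem hp ?_)
            exact ⟨toMT (H := H) ((⟨v, hv⟩ : ↥p) ⊗ₜ[k] w), rfl⟩
          · show _ ∈ _
            rw [TensorProduct.zero_tmul]
            exact Submodule.zero_mem _
          · intro a b ha hb
            show _ ∈ _
            rw [TensorProduct.add_tmul]
            exact Submodule.add_mem _ ha hb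
    · -- right tensor-reducibility of V
      intro W _ _ _ _ _ _ hW
      refine isSemisimpleModule_of_isSemisimpleModule_submodule (s := S)
        (p := fun p => LinearMap.range
          (mapModuleTensor (LinearMap.id (R := k) (M := W)) (inclK k p)
            (fun _ _ => rfl) (inclK_comm p))) ?_ ?_
      · intro p hp
        haveI := (hS p hp).1
        haveI := (hS p hp).2.2 W hW
        exact IsSemisimpleModule.congr
          (LinearEquiv.ofInjective
            (mapModuleTensor (H := H) (LinearMap.id (R := k) (M := W)) (inclK k p)
              (fun _ _ => rfl) (inclK_comm p))
            (map_injective' (fun _ _ hab => hab) Subtype.val_injective)).symm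
      · rw [eq_top_iff]
        rintro x -
        induction x using TensorProduct.induction_on with
        | zero => exact Submodule.zero_mem _
        | add a b ha hb => exact Submodule.add_mem _ ha hb
        | tmul w v =>
          have hv : v ∈ ⨆ p : S, (p : Submodule H V) := by
            rw [← sSup_eq_iSup', hsup]; exact Submodule.mem_top
          refine Submodule.iSup_induction (p := fun p : S => (p : Submodule H V))
            (motive := fun v => toMT (H := H) (w ⊗ₜ[k] v) ∈ _) hv ?_ ?_ ?_
          · rintro ⟨p, hp⟩ v hv
            refine Submodule.mem_iSup_of_mem p (Submodule.mem_iSup_of_mem hp ?_)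
            exact ⟨toMT (H := H) (w ⊗ₜ[k] (⟨v, hv⟩ : ↥p)), rfl⟩
          · show _ ∈ _
            rw [TensorProduct.tmul_zero]
            exact Submodule.zero_mem _
          · intro a b ha hb
            show _ ∈ _
            rw [TensorProduct.tmul_add]
            exact Submodule.add_mem _ ha hb
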